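/- Let n ≥ 2 be even and let w = (1 2 ⋯ n) ∈ Sym(n). Then for both k = n/2 and k = n/2 − 1, the permutation y_k satisfies y_k² = 1, (w y_k)² = 1, w = (w y_k)·y_k, and ℓ(w y_k) + ℓ(y_k) − ℓ(w) = e(w); that is, (w y_{n/2}, y_{n/2}) and (w y_{n/2−1}, y_{n/2−1}) are both spartan pairs for w. -/
import Mathlib


/-- The inversion number of a permutation of `{0, …, n−1}`, which equals the Coxeter
length of the permutation in `W(A_{n−1}) ≅ Sym(n)`. -/
def invNum {n : ℕ} (σ : Equiv.Perm (Fin n)) : ℕ :=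
  (Finset.univ.filter fun p : Fin n × Fin n => p.1 < p.2 ∧ σ p.2 < σ p.1).card

/-- The underlying function of `y_k`: `j ↦ k - 1 - j` for `j < k` and
`j ↦ n + k - 1 - j` for `k ≤ j < n` (the zero-indexed form of the permutation of
`{1, …, n}` sending `i ↦ k + 1 - i` for `1 ≤ i ≤ k` and `i ↦ n + k + 1 - i` for
`k + 1 ≤ i ≤ n`). -/
def ykFun (n k : ℕ) (hk : k ≤ n) (j : Fin n) : Fin n :=
  if _h : (j : ℕ) < k then ⟨k - 1 - j, by omega⟩ else ⟨n + k - 1 - j, by omega⟩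

lemma ykFun_involutive (n k : ℕ) (hk : k ≤ n) : Function.Involutive (ykFun n k hk) := by
  intro j
  unfold ykFun
  by_cases h1 : (j : ℕ) < k
  · rw [dif_pos h1, dif_pos (by simp; omega)]
    apply Fin.ext; simp; omega
  · rw [dif_neg h1, dif_neg (by simp; omega)]
    apply Fin.ext; simp; omega

/-- The involution `y_k` of Hart–Rowley, Proposition 2.8. -/
def yk (n k : ℕ) (hk : k ≤ n) : Equiv.Perm (Fin n) := (ykFun_involutive n k hk).toPerm

lemma yk_val (n k : ℕ) (hk : k ≤ n) (j : Fin n) :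
    ((yk n k hk j : Fin n) : ℕ) = if (j : ℕ) < k then k - 1 - j else n + k - 1 - j := by
  show ((ykFun n k hk j : Fin n) : ℕ) = _
  unfold ykFun
  split <;> simp

lemma yk_sq (n k : ℕ) (hk : k ≤ n) : yk n k hk ^ 2 = 1 := by
  ext j
  simp [sq, yk, ykFun_involutive n k hk j]

lemma finRotate_val (n : ℕ) (hn : 1 ≤ n) (j : Fin n) :
    ((finRotate n j : Fin n) : ℕ) = if (j : ℕ) + 1 = n then 0 else (j : ℕ) + 1 := by
  obtain ⟨m, rfl⟩ : ∃ m, n = m + 1 := ⟨n - 1, by omega⟩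
  rw [finRotate_succ_apply, Fin.val_add]
  have hj := j.isLt
  rcases Nat.eq_zero_or_pos m with rfl | hm
  · have : (j : ℕ) = 0 := by omega
    rw [this]; rfl
  · have h1 : ((1 : Fin (m + 1)) : ℕ) = 1 := by
      rw [Fin.val_one']
      exact Nat.mod_eq_of_lt (by omega)
    rw [h1]
    rcases Nat.lt_or_ge ((j : ℕ) + 1) (m + 1) with h | h
    · rw [if_neg (by omega)]
      exact Nat.mod_eq_of_lt h
    · have he : (j : ℕ) + 1 = m + 1 := by omega
      rw [if_pos he, he, Nat.mod_self]

lemma invNum_eq_sum {n : ℕ} (σ : Equiv.Perm (Fin n)) :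
    invNum σ = ∑ i : Fin n, (Finset.univ.filter fun j : Fin n => i < j ∧ σ j < σ i).card := by
  unfold invNum
  rw [Finset.card_filter, Fintype.sum_prod_type]
  refine Finset.sum_congr rfl fun i _ => ?_
  rw [Finset.card_filter]

lemma card_filter_val {n : ℕ} (q : ℕ → Prop) [DecidablePred q] :
    ((Finset.univ : Finset (Fin n)).filter fun j : Fin n => q (j : ℕ)).card
      = ((Finset.range n).filter q).card := by
  rw [Finset.card_filter, Finset.card_filter, ← Fin.sum_univ_eq_sum_range]

lemma card_filter_Ioo {n a b : ℕ} (hb : b ≤ n) :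
    ((Finset.univ : Finset (Fin n)).filter fun j : Fin n => a < (j : ℕ) ∧ (j : ℕ) < b).card
      = b - 1 - a := by
  rw [card_filter_val (fun t => a < t ∧ t < b)]
  have : (Finset.range n).filter (fun t => a < t ∧ t < b) = Finset.Ioo a b := by
    ext t
    simp only [Finset.mem_filter, Finset.mem_range, Finset.mem_Ioo]
    omega
  rw [this, Nat.card_Ioo]
  omega

lemma invNum_yk (n k : ℕ) (hk : k ≤ n) :
    invNum (yk n k hk) = (∑ j ∈ Finset.range k, j) + (∑ j ∈ Finset.range (n - k), j) := by
  rw [invNum_eq_sum]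
  have row : ∀ i : Fin n,
      (Finset.univ.filter fun j : Fin n => i < j ∧ yk n k hk j < yk n k hk i).card
        = (if (i : ℕ) < k then k else n) - 1 - (i : ℕ) := by
    intro i
    have hi := i.isLt
    have hcong : (Finset.univ.filter fun j : Fin n => i < j ∧ yk n k hk j < yk n k hk i)
        = Finset.univ.filter fun j : Fin n =>
            (i : ℕ) < (j : ℕ) ∧ (j : ℕ) < (if (i : ℕ) < k then k else n) := by
      apply Finset.filter_congr
      intro j _
      have hj := j.isLt
      rw [Fin.lt_def, Fin.lt_def, yk_val, yk_val]
      split_ifs <;> omega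
    rw [hcong, card_filter_Ioo (by split_ifs <;> omega)]
  calc ∑ i : Fin n, (Finset.univ.filter fun j : Fin n => i < j ∧ yk n k hk j < yk n k hk i).card
      = ∑ i : Fin n, ((if (i : ℕ) < k then k else n) - 1 - (i : ℕ)) :=
        Finset.sum_congr rfl fun i _ => row i
    _ = ∑ i ∈ Finset.range n, ((if i < k then k else n) - 1 - i) :=
        Fin.sum_univ_eq_sum_range (fun i => (if i < k then k else n) - 1 - i) n
    _ = (∑ i ∈ Finset.range k, ((if i < k then k else n) - 1 - i))
          + ∑ i ∈ Finset.Ico k n, ((if i < k then k else n) - 1 - i) := by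
        rw [Finset.range_eq_Ico, ← Finset.sum_Ico_consecutive _ (Nat.zero_le k) hk,
          ← Finset.range_eq_Ico]
    _ = (∑ j ∈ Finset.range k, j) + (∑ j ∈ Finset.range (n - k), j) := by
        congr 1
        · rw [← Finset.sum_range_reflect (fun i => i) k]
          refine Finset.sum_congr rfl fun i hi => ?_
          rw [Finset.mem_range] at hi
          rw [if_pos hi]
        · rw [Finset.sum_Ico_eq_sum_range, ← Finset.sum_range_reflect (fun i => i) (n - k)]
          refine Finset.sum_congr rfl fun i hi => ?_
          rw [Finset.mem_range] at hi
          rw [if_neg (by omega)]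
          omega

lemma invNum_finRotate (n : ℕ) (hn : 1 ≤ n) : invNum (finRotate n) = n - 1 := by
  rw [invNum_eq_sum]
  have row : ∀ i : Fin n,
      (Finset.univ.filter fun j : Fin n => i < j ∧ finRotate n j < finRotate n i).card
        = if (i : ℕ) + 1 = n then 0 else 1 := by
    intro i
    have hi := i.isLt
    have hcong : (Finset.univ.filter fun j : Fin n => i < j ∧ finRotate n j < finRotate n i)
        = Finset.univ.filter fun j : Fin n =>
            (n - 1 - (if (i : ℕ) + 1 = n then 0 else 1)) < (j : ℕ) ∧ (j : ℕ) < n := by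
      apply Finset.filter_congr
      intro j _
      have hj := j.isLt
      rw [Fin.lt_def, Fin.lt_def, finRotate_val n hn, finRotate_val n hn]
      split_ifs <;> omega
    rw [hcong, card_filter_Ioo le_rfl]
    split_ifs <;> omega
  calc ∑ i : Fin n, (Finset.univ.filter fun j : Fin n => i < j ∧ finRotate n j < finRotate n i).card
      = ∑ i : Fin n, (if (i : ℕ) + 1 = n then 0 else 1) :=
        Finset.sum_congr rfl fun i _ => row i
    _ = ∑ i ∈ Finset.range n, (if i + 1 = n then 0 else 1) :=
        Fin.sum_univ_eq_sum_range (fun i => if i + 1 = n then 0 else 1) n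
    _ = n - 1 := by
        obtain ⟨m, rfl⟩ : ∃ m, n = m + 1 := ⟨n - 1, by omega⟩
        rw [Finset.sum_range_succ, if_pos rfl]
        rw [Finset.sum_congr rfl (fun i hi => if_neg (by rw [Finset.mem_range] at hi; omega))]
        simp

lemma finRotate_mul_yk (n k : ℕ) (hk : k ≤ n) (hk1 : k + 1 ≤ n) :
    finRotate n * yk n k hk = yk n (k + 1) hk1 := by
  apply Equiv.ext
  intro j
  apply Fin.ext
  have hj := j.isLt
  have hyj := (yk n k hk j).isLt
  rw [Equiv.Perm.mul_apply, finRotate_val n (by omega), yk_val, yk_val]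
  split_ifs <;> omega

lemma yk_mul_self (n k : ℕ) (hk : k ≤ n) : yk n k hk * yk n k hk = 1 := by
  have := yk_sq n k hk
  rwa [sq] at this

lemma factor_char {n : ℕ} (hn : 2 ≤ n) (x y : Equiv.Perm (Fin n))
    (hx : x ^ 2 = 1) (hy : y ^ 2 = 1) (hw : finRotate n = x * y) :
    ∃ c : ℕ, ∃ hc : c < n, x = yk n (c + 1) hc ∧ y = yk n c (le_of_lt hc) := by
  haveI : NeZero n := ⟨by omega⟩
  have hxx : x * x = 1 := by rw [← sq]; exact hx
  have hyy : y * y = 1 := by rw [← sq]; exact hy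
  have hxy : y = x * finRotate n := by
    rw [hw, ← mul_assoc, hxx, one_mul]
  have key : ∀ u : Fin n, finRotate n (x (finRotate n u)) = x u := by
    intro u
    have h2 : y (y u) = u := by
      have := congrArg (fun p : Equiv.Perm (Fin n) => p u) hyy
      simpa using this
    rw [hxy] at h2
    simp only [Equiv.Perm.mul_apply] at h2
    have h3 := congrArg x h2
    rwa [← Equiv.Perm.mul_apply x x, hxx, Equiv.Perm.one_apply] at h3
  set c0 := ((x 0 : Fin n) : ℕ) with hc0
  have hc0n : c0 < n := (x 0).isLt
  have step : ∀ v : ℕ, (hv : v + 1 < n) →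
      (if ((x ⟨v + 1, hv⟩ : Fin n) : ℕ) + 1 = n then 0
        else ((x ⟨v + 1, hv⟩ : Fin n) : ℕ) + 1)
        = ((x ⟨v, by omega⟩ : Fin n) : ℕ) := by
    intro v hv
    have hwv : finRotate n ⟨v, by omega⟩ = ⟨v + 1, hv⟩ := by
      apply Fin.ext
      rw [finRotate_val n (by omega)]
      show (if v + 1 = n then 0 else v + 1) = v + 1
      rw [if_neg (by omega)]
    have hk := key ⟨v, by omega⟩
    rw [hwv] at hk
    have h3 := congrArg Fin.val hk
    rw [finRotate_val n (by omega)] at h3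
    exact h3
  have main : ∀ v : ℕ, (hv : v < n) →
      ((x ⟨v, hv⟩ : Fin n) : ℕ) = if v ≤ c0 then c0 - v else c0 + n - v := by
    intro v
    induction v with
    | zero =>
      intro hv
      have h0 : (⟨0, hv⟩ : Fin n) = 0 := by apply Fin.ext; simp
      rw [h0, if_pos (Nat.zero_le _)]
      omega
    | succ v ih =>
      intro hv
      have h1 := ih (by omega)
      have h2 := step v hv
      have ha := (x ⟨v + 1, hv⟩).isLt
      rw [h1] at h2
      split_ifs at h2 ⊢ <;> omega
  have hxk : x = yk n (c0 + 1) (by omega) := by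
    apply Equiv.ext; intro j; apply Fin.ext
    have hmj := main j.val j.isLt
    have hj := j.isLt
    rw [Fin.eta] at hmj
    rw [hmj, yk_val]
    split_ifs <;> omega
  refine ⟨c0, hc0n, hxk, ?_⟩
  have hrot : finRotate n = yk n (c0 + 1) (by omega) * yk n c0 (by omega) := by
    rw [← finRotate_mul_yk n c0 (by omega) (by omega), mul_assoc, yk_mul_self, mul_one]
  rw [hxy, hxk, hrot, ← mul_assoc, yk_mul_self, one_mul]

lemma quad_min (m' c b : ℕ) (h : c + b + 1 = (m' + 1) + (m' + 1)) :
    (m' + 1) * (m' + 1) + m' * m' ≤ c * c + b * b := by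
  rcases Nat.le_total c b with h' | h'
  · obtain ⟨d, hd⟩ : ∃ d, b = (m' + 1) + d := ⟨b - (m' + 1), by omega⟩
    have hcd : c + d = m' := by omega
    obtain rfl : m' = c + d := hcd.symm
    subst hd
    nlinarith [sq_nonneg d]
  · obtain ⟨d, hd⟩ : ∃ d, c = (m' + 1) + d := ⟨c - (m' + 1), by omega⟩
    have hcd : b + d = m' := by omega
    obtain rfl : m' = b + d := hcd.symm
    subst hd
    nlinarith [sq_nonneg d]

lemma doubled (n m c : ℕ) (hm : n = m + m) (h1 : 1 ≤ m) (hc : c < n) :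
    (m + 1) * m + (n - (m + 1)) * ((n - (m + 1)) - 1) + (m * (m - 1) + (n - m) * ((n - m) - 1))
      ≤ (c + 1) * c + (n - (c + 1)) * ((n - (c + 1)) - 1)
          + (c * (c - 1) + (n - c) * ((n - c) - 1)) := by
  obtain ⟨m', rfl⟩ : ∃ m', m = m' + 1 := ⟨m - 1, by omega⟩
  set b := n - 1 - c with hb
  have e1 : n - (c + 1) = b := by omega
  have e2 : n - c = b + 1 := by omega
  have e3 : n - (m' + 1 + 1) = m' := by omega
  have e4 : n - (m' + 1) = m' + 1 := by omega
  rw [e1, e2, e3, e4]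
  have hid : ∀ a : ℕ, a * (a - 1) + a = a * a := by
    intro a
    cases a with
    | zero => rfl
    | succ t => simp [Nat.succ_sub_one]; ring
  have hq := quad_min m' c b (by omega)
  have h5 : (b + 1) - 1 = b := by omega
  have h6 : (m' + 1) - 1 = m' := by omega
  rw [h5, h6]
  nlinarith [hq, hid c, hid b, hid m']


/-- The excess of a permutation `w`:
`e(w) = min{ℓ(x) + ℓ(y) − ℓ(w) : w = xy, x² = 1 = y²}`. -/
noncomputable def excess {n : ℕ} (w : Equiv.Perm (Fin n)) : ℕ :=
  sInf {m : ℕ | ∃ x y : Equiv.Perm (Fin n), x ^ 2 = 1 ∧ y ^ 2 = 1 ∧ w = x * y ∧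
    m = invNum x + invNum y - invNum w}

/-- **Hart–Rowley, Proposition 2.8(iii).** For even `n ≥ 2`, the pairs
`(w y_k, y_k)` for both `k = n/2` and `k = n/2 − 1` are spartan pairs for the `n`-cycle
`w = (1 2 ⋯ n)` (zero-indexed: `finRotate n`): both components are involutions whose
product is `w`, and `ℓ(w y_k) + ℓ(y_k) − ℓ(w)` attains the excess `e(w)`. -/
theorem spartan_pairs_of_cycle_even (n : ℕ) (hn : 2 ≤ n) (heven : Even n) :
    ((yk n (n / 2) (by omega)) ^ 2 = 1 ∧
      (finRotate n * yk n (n / 2) (by omega)) ^ 2 = 1 ∧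
      finRotate n = (finRotate n * yk n (n / 2) (by omega)) * yk n (n / 2) (by omega) ∧
      invNum (finRotate n * yk n (n / 2) (by omega)) + invNum (yk n (n / 2) (by omega))
        - invNum (finRotate n) = excess (finRotate n)) ∧
    ((yk n (n / 2 - 1) (by omega)) ^ 2 = 1 ∧
      (finRotate n * yk n (n / 2 - 1) (by omega)) ^ 2 = 1 ∧
      finRotate n = (finRotate n * yk n (n / 2 - 1) (by omega)) * yk n (n / 2 - 1) (by omega) ∧
      invNum (finRotate n * yk n (n / 2 - 1) (by omega)) + invNum (yk n (n / 2 - 1) (by omega))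
        - invNum (finRotate n) = excess (finRotate n)) := by
  obtain ⟨r, hr⟩ := heven
  have hq : n / 2 + n / 2 = n := by omega
  have hq1 : 1 ≤ n / 2 := by omega
  have hprod : finRotate n = yk n (n / 2 + 1) (by omega) * yk n (n / 2) (by omega) := by
    rw [← finRotate_mul_yk n (n / 2) (by omega) (by omega), mul_assoc, yk_mul_self, mul_one]
  have hexc : excess (finRotate n)
      = invNum (yk n (n / 2 + 1) (by omega)) + invNum (yk n (n / 2) (by omega))
        - invNum (finRotate n) := by
    have hmem : invNum (yk n (n / 2 + 1) (by omega)) + invNum (yk n (n / 2) (by omega))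
        - invNum (finRotate n) ∈ {m : ℕ | ∃ x y : Equiv.Perm (Fin n),
          x ^ 2 = 1 ∧ y ^ 2 = 1 ∧ finRotate n = x * y ∧
          m = invNum x + invNum y - invNum (finRotate n)} :=
      ⟨yk n (n / 2 + 1) (by omega), yk n (n / 2) (by omega),
        yk_sq _ _ _, yk_sq _ _ _, hprod, rfl⟩
    refine le_antisymm (Nat.sInf_le hmem) (le_csInf ⟨_, hmem⟩ ?_)
    rintro b ⟨x, y, hx, hy, hxy, rfl⟩
    obtain ⟨c, hc, rfl, rfl⟩ := factor_char hn x y hx hy hxy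
    apply Nat.sub_le_sub_right
    simp only [invNum_yk]
    have hd := doubled n (n / 2) c (by omega) hq1 hc
    have expand : ∀ A B C D : ℕ, (A + B + (C + D)) * 2 = A * 2 + B * 2 + (C * 2 + D * 2) := by
      intros; ring
    have h2 : ((∑ j ∈ Finset.range (n / 2 + 1), j) + (∑ j ∈ Finset.range (n - (n / 2 + 1)), j)
          + ((∑ j ∈ Finset.range (n / 2), j) + (∑ j ∈ Finset.range (n - n / 2), j))) * 2
        ≤ ((∑ j ∈ Finset.range (c + 1), j) + (∑ j ∈ Finset.range (n - (c + 1)), j)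
          + ((∑ j ∈ Finset.range c, j) + (∑ j ∈ Finset.range (n - c), j))) * 2 := by
      rw [expand, expand, Finset.sum_range_id_mul_two, Finset.sum_range_id_mul_two,
        Finset.sum_range_id_mul_two, Finset.sum_range_id_mul_two, Finset.sum_range_id_mul_two,
        Finset.sum_range_id_mul_two, Finset.sum_range_id_mul_two, Finset.sum_range_id_mul_two]
      exact hd
    omega
  have e1 : n / 2 - 1 + 1 = n / 2 := by omega
  have e2 : n - (n / 2 - 1) = n / 2 + 1 := by omega
  have e3 : n - (n / 2 + 1) = n / 2 - 1 := by omega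
  have e4 : n - n / 2 = n / 2 := by omega
  refine ⟨⟨yk_sq _ _ _, ?_, ?_, ?_⟩, ⟨yk_sq _ _ _, ?_, ?_, ?_⟩⟩
  · rw [finRotate_mul_yk n (n / 2) (by omega) (by omega)]
    exact yk_sq _ _ _
  · rw [mul_assoc, yk_mul_self, mul_one]
  · rw [finRotate_mul_yk n (n / 2) (by omega) (by omega), hexc]
  · rw [finRotate_mul_yk n (n / 2 - 1) (by omega) (by omega)]
    exact yk_sq _ _ _
  · rw [mul_assoc, yk_mul_self, mul_one]
  · rw [finRotate_mul_yk n (n / 2 - 1) (by omega) (by omega)]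
    refine Eq.trans ?_ hexc.symm
    simp only [invNum_yk]
    rw [e1, e2, e3, e4]
    omega
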